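/- If for each degree of freedom σ in a simplex K the coefficients satisfy E_σ - m_σ²/(2ρ_σ) ≥ 0 and ρ_σ > 0, then the Bernstein-reconstructed fields ρ = Σ ρ_σ B_σ, m = Σ m_σ B_σ, E = Σ E_σ B_σ satisfy E(x) - m(x)²/(2ρ(x)) ≥ 0 at every point x of K. -/

import Mathlib

/-- If the Bernstein coefficients satisfy `ρ_σ > 0` and `E_σ - m_σ²/(2ρ_σ) ≥ 0`,
then the Bernstein-reconstructed fields satisfy `E(x) - m(x)²/(2ρ(x)) ≥ 0` at
every point of `K`. -/
theorem reconstructed_internal_energy_nonneg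
    {X : Type*} (K : Set X) {ι : Type*} [Fintype ι]
    (B : ι → X → ℝ)
    (hBnonneg : ∀ σ, ∀ x ∈ K, 0 ≤ B σ x)
    (hBsum : ∀ x ∈ K, ∑ σ, B σ x = 1)
    (ρc mc Ec : ι → ℝ)
    (hρ : ∀ σ, 0 < ρc σ)
    (he : ∀ σ, 0 ≤ Ec σ - (mc σ) ^ 2 / (2 * ρc σ)) :
    ∀ x ∈ K,
      0 ≤ (∑ σ, Ec σ * B σ x) -
        (∑ σ, mc σ * B σ x) ^ 2 / (2 * ∑ σ, ρc σ * B σ x) := by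
  intro x hx
  have hB : ∀ σ, 0 ≤ B σ x := fun σ => hBnonneg σ x hx
  -- positivity of the reconstructed density
  have hSpos : 0 < ∑ σ, ρc σ * B σ x := by
    obtain ⟨σ0, hσ0⟩ : ∃ σ, 0 < B σ x := by
      by_contra h
      push_neg at h
      have hz : ∀ σ, B σ x = 0 := fun σ => le_antisymm (h σ) (hB σ)
      have h1 := hBsum x hx
      simp [hz] at h1
    calc (0:ℝ) < ρc σ0 * B σ0 x := mul_pos (hρ σ0) hσ0
      _ ≤ ∑ σ, ρc σ * B σ x :=
        Finset.single_le_sum (fun σ _ => mul_nonneg (hρ σ).le (hB σ))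
          (Finset.mem_univ σ0)
  rw [sub_nonneg, div_le_iff₀ (by linarith)]
  -- Cauchy–Schwarz with weights √(B σ x)
  have hCS := Finset.sum_mul_sq_le_sq_mul_sq Finset.univ
    (fun σ => mc σ * Real.sqrt (B σ x) / Real.sqrt (ρc σ))
    (fun σ => Real.sqrt (ρc σ) * Real.sqrt (B σ x))
  have hfg : ∀ σ, (mc σ * Real.sqrt (B σ x) / Real.sqrt (ρc σ)) *
      (Real.sqrt (ρc σ) * Real.sqrt (B σ x)) = mc σ * B σ x := by
    intro σ
    have hρs : Real.sqrt (ρc σ) ≠ 0 := (Real.sqrt_pos.mpr (hρ σ)).ne'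
    have hb : Real.sqrt (B σ x) * Real.sqrt (B σ x) = B σ x := Real.mul_self_sqrt (hB σ)
    field_simp
    linear_combination mc σ * hb
  have hf2 : ∀ σ, (mc σ * Real.sqrt (B σ x) / Real.sqrt (ρc σ)) ^ 2 =
      mc σ ^ 2 * B σ x / ρc σ := by
    intro σ
    rw [div_pow, mul_pow, Real.sq_sqrt (hB σ), Real.sq_sqrt (hρ σ).le]
  have hg2 : ∀ σ, (Real.sqrt (ρc σ) * Real.sqrt (B σ x)) ^ 2 = ρc σ * B σ x := by
    intro σ
    rw [mul_pow, Real.sq_sqrt (hB σ), Real.sq_sqrt (hρ σ).le]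
  simp only [hfg, hf2, hg2] at hCS
  have hEc : ∀ σ, mc σ ^ 2 * B σ x / ρc σ ≤ 2 * (Ec σ * B σ x) := by
    intro σ
    have h1 := he σ
    rw [sub_nonneg, div_le_iff₀ (by have := hρ σ; linarith)] at h1
    rcases eq_or_lt_of_le (hB σ) with h | h
    · rw [← h]; simp
    · rw [div_le_iff₀ (hρ σ)]
      calc mc σ ^ 2 * B σ x ≤ Ec σ * (2 * ρc σ) * B σ x := by
            exact mul_le_mul_of_nonneg_right h1 (hB σ)
        _ = 2 * (Ec σ * B σ x) * ρc σ := by ring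
  calc (∑ σ, mc σ * B σ x) ^ 2
      ≤ (∑ σ, mc σ ^ 2 * B σ x / ρc σ) * ∑ σ, ρc σ * B σ x := hCS
    _ ≤ (∑ σ, 2 * (Ec σ * B σ x)) * ∑ σ, ρc σ * B σ x := by
        apply mul_le_mul_of_nonneg_right _ hSpos.le
        exact Finset.sum_le_sum fun σ _ => hEc σ
    _ = (∑ σ, Ec σ * B σ x) * (2 * ∑ σ, ρc σ * B σ x) := by
        rw [← Finset.mul_sum]; ring
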